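/- Let r and r̂ be positive integers, and suppose Γ = Γ₀ × Γ₁ with Γ₀ ≅ H(r), Γ₁ ≅ ℤ, is a normal subgroup of Γ̂ = Γ̂₀ × Γ̂₁ with Γ̂₀ ≅ H(r̂), Γ̂₁ ≅ ℤ. Then the quotient group G = Γ̂/Γ is finite and has a normal abelian subgroup of index at most r. -/

import Mathlib

/-- The "discrete Heisenberg group" H(r): the group with presentation
⟨δ₁, δ₂, δ₃ ∣ [δ₁,δ₃] = [δ₂,δ₃] = 1, [δ₁,δ₂] = δ₃^r⟩, realized concretely as the
group of upper unitriangular 3×3 rational matrices with (1,2)-entry `a ∈ ℤ`,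
(2,3)-entry `b ∈ ℤ` and (1,3)-entry `c/r` with `c ∈ ℤ`; the element ⟨a, b, c⟩
corresponds to δ₁^a δ₂^b (δ₃-part c), with δ₁ = ⟨1,0,0⟩, δ₂ = ⟨0,1,0⟩,
δ₃ = ⟨0,0,1⟩. -/
@[ext]
structure Heis (r : ℕ) : Type where
  a : ℤ
  b : ℤ
  c : ℤ

namespace Heis

variable {r : ℕ}

instance : Mul (Heis r) :=
  ⟨fun x y => ⟨x.a + y.a, x.b + y.b, x.c + y.c + r * x.a * y.b⟩⟩

instance : One (Heis r) := ⟨⟨0, 0, 0⟩⟩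

instance : Inv (Heis r) :=
  ⟨fun x => ⟨-x.a, -x.b, -x.c + r * x.a * x.b⟩⟩

@[simp] lemma mul_a (x y : Heis r) : (x * y).a = x.a + y.a := rfl
@[simp] lemma mul_b (x y : Heis r) : (x * y).b = x.b + y.b := rfl
@[simp] lemma mul_c (x y : Heis r) : (x * y).c = x.c + y.c + r * x.a * y.b := rfl
@[simp] lemma one_a : (1 : Heis r).a = 0 := rfl
@[simp] lemma one_b : (1 : Heis r).b = 0 := rfl
@[simp] lemma one_c : (1 : Heis r).c = 0 := rfl
@[simp] lemma inv_a (x : Heis r) : x⁻¹.a = -x.a := rfl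
@[simp] lemma inv_b (x : Heis r) : x⁻¹.b = -x.b := rfl
@[simp] lemma inv_c (x : Heis r) : x⁻¹.c = -x.c + r * x.a * x.b := rfl

instance instGroup : Group (Heis r) where
  mul_assoc x y z := by ext <;> simp <;> ring
  one_mul x := by ext <;> simp
  mul_one x := by ext <;> simp
  inv_mul_cancel x := by ext <;> simp <;> ring

/-- The generator δ₁ of H(r). -/
def δ₁ : Heis r := ⟨1, 0, 0⟩

/-- The generator δ₂ of H(r). -/
def δ₂ : Heis r := ⟨0, 1, 0⟩

/-- The generator δ₃ of H(r); it generates the center of H(r) (for r > 0). -/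
def δ₃ : Heis r := ⟨0, 0, 1⟩

end Heis


section Aux

namespace Heis

variable {R : ℕ}

lemma comm_eq (x y : Heis R) :
    x * y * x⁻¹ * y⁻¹ = ⟨0, 0, (R : ℤ) * (x.a * y.b - x.b * y.a)⟩ := by
  ext <;> simp <;> ring

/-- the homomorphism `ℤ → Heis R` onto central elements. -/
def central : Multiplicative ℤ →* Heis R where
  toFun n := ⟨0, 0, n.toAdd⟩
  map_one' := by ext <;> simp
  map_mul' x y := by ext <;> simp

lemma central_zpow (c m : ℤ) : (⟨0, 0, c⟩ : Heis R) ^ m = ⟨0, 0, m * c⟩ := by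
  have h : (⟨0, 0, c⟩ : Heis R) = central (Multiplicative.ofAdd c) := rfl
  rw [h, ← map_zpow, ← ofAdd_zsmul]
  show (⟨0, 0, Multiplicative.toAdd (Multiplicative.ofAdd (m • c))⟩ : Heis R) = _
  simp [smul_eq_mul, mul_comm]

/-- a-coordinate homomorphism. -/
def coordA : Heis R →* Multiplicative ℤ where
  toFun x := Multiplicative.ofAdd x.a
  map_one' := rfl
  map_mul' x y := by simp [mul_a, ofAdd_add]

/-- b-coordinate homomorphism. -/
def coordB : Heis R →* Multiplicative ℤ where
  toFun x := Multiplicative.ofAdd x.b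
  map_one' := rfl
  map_mul' x y := by simp [mul_b, ofAdd_add]

lemma zpow_a (x : Heis R) (m : ℤ) : (x ^ m).a = m * x.a := by
  have h := map_zpow (coordA (R := R)) x m
  have h2 := congrArg Multiplicative.toAdd h
  simpa [coordA, toAdd_zpow, smul_eq_mul] using h2

lemma zpow_b (x : Heis R) (m : ℤ) : (x ^ m).b = m * x.b := by
  have h := map_zpow (coordB (R := R)) x m
  have h2 := congrArg Multiplicative.toAdd h
  simpa [coordB, toAdd_zpow, smul_eq_mul] using h2

end Heis

namespace HeisAux

variable {R : ℕ}

local notation "GH" => Heis R × Multiplicative ℤ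

lemma commG (x y : GH) :
    x * y * x⁻¹ * y⁻¹ = (⟨0, 0, (R : ℤ) * (x.1.a * y.1.b - x.1.b * y.1.a)⟩, 1) := by
  refine Prod.ext ?_ ?_
  · simpa using Heis.comm_eq x.1 y.1
  · show x.2 * y.2 * x.2⁻¹ * y.2⁻¹ = 1
    rw [mul_comm x.2 y.2]
    group

lemma commG' (x y : GH) :
    (x * y)⁻¹ * (y * x) = (⟨0, 0, (R : ℤ) * (y.1.a * x.1.b - y.1.b * x.1.a)⟩, 1) := by
  have : (x * y)⁻¹ * (y * x) = y⁻¹ * x⁻¹ * y * x := by group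
  rw [this]
  have h := commG (y⁻¹) (x⁻¹)
  simp only [inv_inv] at h
  rw [h]
  refine Prod.ext ?_ rfl
  show (⟨0,0,(R:ℤ) * ((y⁻¹).1.a * (x⁻¹).1.b - (y⁻¹).1.b * (x⁻¹).1.a)⟩ : Heis R) = _
  ext <;> simp <;> ring

lemma zpowG_a (x : GH) (m : ℤ) : (x ^ m).1.a = m * x.1.a := by
  have h : (x ^ m).1 = x.1 ^ m := map_zpow (MonoidHom.fst (Heis R) (Multiplicative ℤ)) x m
  rw [h, Heis.zpow_a]

lemma zpowG_b (x : GH) (m : ℤ) : (x ^ m).1.b = m * x.1.b := by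
  have h : (x ^ m).1 = x.1 ^ m := map_zpow (MonoidHom.fst (Heis R) (Multiplicative ℤ)) x m
  rw [h, Heis.zpow_b]

lemma zpowG_t (x : GH) (m : ℤ) : Multiplicative.toAdd (x ^ m).2 = m * Multiplicative.toAdd x.2 := by
  have h : (x ^ m).2 = x.2 ^ m := map_zpow (MonoidHom.snd (Heis R) (Multiplicative ℤ)) x m
  rw [h, toAdd_zpow, smul_eq_mul]

lemma central_zpowG (c t m : ℤ) :
    ((⟨0, 0, c⟩, Multiplicative.ofAdd t) : GH) ^ m = (⟨0, 0, m * c⟩, Multiplicative.ofAdd (m * t)) := by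
  refine Prod.ext ?_ ?_
  · have h : ((((⟨0, 0, c⟩, Multiplicative.ofAdd t) : GH)) ^ m).1
        = ((⟨0, 0, c⟩ : Heis R)) ^ m := map_zpow (MonoidHom.fst (Heis R) (Multiplicative ℤ)) _ m
    rw [h, Heis.central_zpow c m]
  · have h : ((((⟨0, 0, c⟩, Multiplicative.ofAdd t) : GH)) ^ m).2
        = (Multiplicative.ofAdd t) ^ m := map_zpow (MonoidHom.snd (Heis R) (Multiplicative ℤ)) _ m
    rw [h, ← ofAdd_zsmul, smul_eq_mul]

lemma central_form (x : GH) (ha : x.1.a = 0) (hb : x.1.b = 0) :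
    x = (⟨0, 0, x.1.c⟩, Multiplicative.ofAdd (Multiplicative.toAdd x.2)) := by
  refine Prod.ext ?_ (by simp)
  ext <;> simp [ha, hb]

lemma central_comm (x : GH) (ha : x.1.a = 0) (hb : x.1.b = 0) (y : GH) :
    x * y = y * x := by
  refine Prod.ext ?_ (mul_comm _ _)
  show x.1 * y.1 = y.1 * x.1
  ext <;> simp [ha, hb] <;> ring

lemma exists_red (α d : ℤ) (hd : d ≠ 0) :
    ∃ m : ℤ, 0 ≤ α - m * d ∧ α - m * d < (d.natAbs : ℤ) := by
  rw [← Int.abs_eq_natAbs]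
  have hd' : 0 < |d| := abs_pos.mpr hd
  obtain ⟨m, hm⟩ : ∃ m : ℤ, m * d = (α / |d|) * |d| := by
    rcases abs_cases d with ⟨h, _⟩ | ⟨h, _⟩
    · exact ⟨α / |d|, by rw [h]⟩
    · exact ⟨-(α / |d|), by rw [h]; ring⟩
  refine ⟨m, ?_, ?_⟩
  · rw [hm]
    have := Int.emod_nonneg α hd'.ne'
    rw [Int.emod_def] at this
    linarith
  · have := Int.emod_lt_of_pos α hd'
    rw [Int.emod_def] at this
    rw [hm]
    linarith

end HeisAux

end Aux

open HeisAux Multiplicative in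
/-- Lemma A.13: suppose Γ = Γ₀ × Γ₁ with Γ₀ ≅ H(r), Γ₁ ≅ ℤ, is a normal subgroup of
Γ̂ = Γ̂₀ × Γ̂₁ with Γ̂₀ ≅ H(r̂), Γ̂₁ ≅ ℤ. Then the quotient G = Γ̂/Γ is finite and has
a normal abelian subgroup of index at most r. -/
theorem stmt_19 (r rh : ℕ) (hr : 0 < r) (hrh : 0 < rh)
    (K : Subgroup (Heis rh × Multiplicative ℤ)) [K.Normal]
    (hiso : Nonempty ((Heis r × Multiplicative ℤ) ≃* K)) :
    Finite ((Heis rh × Multiplicative ℤ) ⧸ K) ∧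
      ∃ A : Subgroup ((Heis rh × Multiplicative ℤ) ⧸ K),
        A.Normal ∧ (∀ x y : A, x * y = y * x) ∧ A.index ≤ r := by
  obtain ⟨φ⟩ := hiso
  have hrh' : (rh : ℤ) ≠ 0 := by exact_mod_cast hrh.ne'
  have hr' : (r : ℤ) ≠ 0 := by exact_mod_cast hr.ne'
  set Φ : (Heis r × Multiplicative ℤ) →* Heis rh × Multiplicative ℤ :=
    K.subtype.comp φ.toMonoidHom with hΦ
  have hΦK : ∀ z, Φ z ∈ K := fun z => (φ z).2
  have hΦinj : Function.Injective Φ := Subtype.coe_injective.comp φ.injective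
  set x₁ := Φ (Heis.δ₁, 1) with hx₁
  set x₂ := Φ (Heis.δ₂, 1) with hx₂
  set p := Φ (Heis.δ₃, 1) with hp
  set q := Φ (1, ofAdd 1) with hq
  set D := x₁.1.a * x₂.1.b - x₁.1.b * x₂.1.a with hD
  -- the commutator relation in the source group
  have hsrc : (Heis.δ₁, (1 : Multiplicative ℤ)) * (Heis.δ₂, 1) * (Heis.δ₁, 1)⁻¹ *
      (Heis.δ₂, 1)⁻¹ = ((Heis.δ₃, (1 : Multiplicative ℤ)) : Heis r × Multiplicative ℤ) ^ (r : ℤ) := by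
    rw [commG]
    have : ((Heis.δ₃, (1 : Multiplicative ℤ)) : Heis r × Multiplicative ℤ)
        = ((⟨0,0,1⟩ : Heis r), ofAdd 0) := by rfl
    rw [this, central_zpowG]
    refine Prod.ext ?_ (by simp)
    show (⟨0, 0, (r : ℤ) * _⟩ : Heis r) = _
    ext <;> simp [Heis.δ₁, Heis.δ₂]
  have hpr : p ^ (r : ℤ) = (⟨0, 0, (rh : ℤ) * D⟩, 1) := by
    have h := congrArg Φ hsrc
    rw [map_zpow] at h
    rw [← hp] at h
    rw [← h]
    simp only [map_mul, map_inv, ← hx₁, ← hx₂]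
    rw [commG]
  -- D ≠ 0
  have hδ₃r : ((Heis.δ₃, (1 : Multiplicative ℤ)) : Heis r × Multiplicative ℤ) ^ (r : ℤ) ≠ 1 := by
    have : ((Heis.δ₃, (1 : Multiplicative ℤ)) : Heis r × Multiplicative ℤ)
        = ((⟨0,0,1⟩ : Heis r), ofAdd 0) := rfl
    rw [this, central_zpowG]
    intro hcon
    have := congrArg (fun z => (Prod.fst z).c) hcon
    simp at this
    exact hr.ne' this
  have hDne : D ≠ 0 := by
    intro h0
    apply hδ₃r
    apply hΦinj
    rw [map_zpow, map_one, ← hp, hpr, h0]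
    refine Prod.ext ?_ rfl
    ext <;> simp
  -- elements commuting with x₁ and x₂ have vanishing a,b coordinates
  have hzero : ∀ w : Heis rh × Multiplicative ℤ, w * x₁ = x₁ * w → w * x₂ = x₂ * w →
      w.1.a = 0 ∧ w.1.b = 0 := by
    intro w h1 h2
    have e1 : (rh : ℤ) * (w.1.a * x₁.1.b - w.1.b * x₁.1.a) = 0 := by
      have := commG w x₁
      rw [h1] at this
      have h' : (1 : Heis rh × Multiplicative ℤ) = (⟨0, 0, (rh:ℤ) * (w.1.a * x₁.1.b - w.1.b * x₁.1.a)⟩, 1) := by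
        rw [← this]; group
      have := congrArg (fun z => (Prod.fst z).c) h'
      simpa using this.symm
    have e2 : (rh : ℤ) * (w.1.a * x₂.1.b - w.1.b * x₂.1.a) = 0 := by
      have := commG w x₂
      rw [h2] at this
      have h' : (1 : Heis rh × Multiplicative ℤ) = (⟨0, 0, (rh:ℤ) * (w.1.a * x₂.1.b - w.1.b * x₂.1.a)⟩, 1) := by
        rw [← this]; group
      have := congrArg (fun z => (Prod.fst z).c) h'
      simpa using this.symm
    have e1' : w.1.a * x₁.1.b - w.1.b * x₁.1.a = 0 := by
      rcases mul_eq_zero.mp e1 with h | h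
      · exact absurd h hrh'
      · exact h
    have e2' : w.1.a * x₂.1.b - w.1.b * x₂.1.a = 0 := by
      rcases mul_eq_zero.mp e2 with h | h
      · exact absurd h hrh'
      · exact h
    constructor
    · have : w.1.a * D = 0 := by rw [hD]; linear_combination x₁.1.a * e2' - x₂.1.a * e1'
      exact (mul_eq_zero.mp this).resolve_right hDne
    · have : w.1.b * D = 0 := by rw [hD]; linear_combination x₁.1.b * e2' - x₂.1.b * e1'
      exact (mul_eq_zero.mp this).resolve_right hDne
  -- p and q are central-ish
  have hpab : p.1.a = 0 ∧ p.1.b = 0 := by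
    apply hzero
    · rw [hp, hx₁, ← map_mul, ← map_mul]
      congr 1
    · rw [hp, hx₂, ← map_mul, ← map_mul]
      congr 1
  have hqab : q.1.a = 0 ∧ q.1.b = 0 := by
    apply hzero
    · rw [hq, hx₁, ← map_mul, ← map_mul]
      congr 1
    · rw [hq, hx₂, ← map_mul, ← map_mul]
      congr 1
  set c₀ := p.1.c with hc₀
  set pt := toAdd p.2 with hpt
  set qc := q.1.c with hqc
  set qt := toAdd q.2 with hqt
  have hpform : p = (⟨0, 0, c₀⟩, ofAdd pt) := central_form p hpab.1 hpab.2
  have hqform : q = (⟨0, 0, qc⟩, ofAdd qt) := central_form q hqab.1 hqab.2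
  -- r * c₀ = rh * D and pt = 0
  have hpzpow : ∀ m : ℤ, p ^ m = (⟨0, 0, m * c₀⟩, ofAdd (m * pt)) := by
    intro m; rw [hpform, central_zpowG]
  have hqzpow : ∀ m : ℤ, q ^ m = (⟨0, 0, m * qc⟩, ofAdd (m * qt)) := by
    intro m; rw [hqform, central_zpowG]
  have hrc₀ : (r : ℤ) * c₀ = (rh : ℤ) * D := by
    have := (hpzpow (r : ℤ)).symm.trans hpr
    exact congrArg (fun z => (Prod.fst z).c) this
  have hpt0 : pt = 0 := by
    have := (hpzpow (r : ℤ)).symm.trans hpr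
    have h2 := congrArg (fun z => toAdd (Prod.snd z)) this
    simp at h2
    rcases h2 with h | h
    · exact h
    · exact absurd h hr.ne'
  have hc₀ne : c₀ ≠ 0 := by
    intro h0
    apply mul_ne_zero hrh' hDne
    rw [← hrc₀, h0, mul_zero]
  -- qt ≠ 0
  have hqtne : qt ≠ 0 := by
    intro h0
    have hpq : p ^ qc = q ^ c₀ := by
      rw [hpzpow, hqzpow, hpt0, h0, mul_zero, mul_zero, mul_comm]
    have hsrceq : ((Heis.δ₃, (1 : Multiplicative ℤ)) : Heis r × Multiplicative ℤ) ^ qc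
        = (((1 : Heis r), ofAdd (1:ℤ)) : Heis r × Multiplicative ℤ) ^ c₀ := by
      apply hΦinj
      rw [map_zpow, map_zpow, ← hp, ← hq]
      exact hpq
    have e1 : ((Heis.δ₃, (1 : Multiplicative ℤ)) : Heis r × Multiplicative ℤ) ^ qc
        = ((⟨0,0,qc⟩ : Heis r), ofAdd (0:ℤ)) := by
      have h' : ((Heis.δ₃, (1 : Multiplicative ℤ)) : Heis r × Multiplicative ℤ)
          = ((⟨0,0,1⟩ : Heis r), ofAdd (0:ℤ)) := rfl
      rw [h', central_zpowG, mul_one, mul_zero]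
    have e2 : (((1 : Heis r), ofAdd (1:ℤ)) : Heis r × Multiplicative ℤ) ^ c₀
        = ((⟨0,0,0⟩ : Heis r), ofAdd c₀) := by
      have h' : (((1 : Heis r), ofAdd (1:ℤ)) : Heis r × Multiplicative ℤ)
          = ((⟨0,0,0⟩ : Heis r), ofAdd (1:ℤ)) := rfl
      rw [h', central_zpowG, mul_zero, mul_one]
    rw [e1, e2] at hsrceq
    have h2 := congrArg (fun z => toAdd (Prod.snd z)) hsrceq
    simp at h2
    exact hc₀ne h2.symm
  -- central elements with c₀ ∣ c lie in K
  have hcentK : ∀ c : ℤ, c₀ ∣ c → ((⟨0,0,c⟩ : Heis rh), (1 : Multiplicative ℤ)) ∈ K := by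
    rintro c ⟨j, rfl⟩
    have hmem : p ^ j ∈ K := Subgroup.zpow_mem K (hΦK _) j
    have he : p ^ j = ((⟨0,0,c₀*j⟩ : Heis rh), (1 : Multiplicative ℤ)) := by
      rw [hpzpow, hpt0, mul_zero]
      exact Prod.ext (by ext <;> simp [Int.mul_comm]) (by simp)
    rwa [he] at hmem
  -- conversely, central elements of K have c₀ ∣ c
  have hLc : ∀ c : ℤ, ((⟨0,0,c⟩ : Heis rh), (1 : Multiplicative ℤ)) ∈ K → c₀ ∣ c := by
    intro c hc
    set e := φ.symm ⟨((⟨0,0,c⟩ : Heis rh), (1 : Multiplicative ℤ)), hc⟩ with he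
    have heΦ : Φ e = ((⟨0,0,c⟩ : Heis rh), (1 : Multiplicative ℤ)) := by
      rw [hΦ]; simp [he]
    have hcomm : ∀ y, Φ e * Φ y = Φ y * Φ e := by
      intro y
      rw [heΦ]
      exact central_comm _ rfl rfl _
    have h1 : e * (Heis.δ₁, 1) = (Heis.δ₁, 1) * e :=
      hΦinj (by rw [map_mul, map_mul]; exact hcomm _)
    have h2 : e * (Heis.δ₂, 1) = (Heis.δ₂, 1) * e :=
      hΦinj (by rw [map_mul, map_mul]; exact hcomm _)
    have hb0 : e.1.b = 0 := by
      have h3 := congrArg (fun z => (Prod.fst z).c) h1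
      simp only [Prod.fst_mul, Heis.mul_c, Heis.δ₁] at h3
      have h4 : (r:ℤ) * e.1.b = 0 := by linarith [h3]
      exact (mul_eq_zero.mp h4).resolve_left hr'
    have ha0 : e.1.a = 0 := by
      have h3 := congrArg (fun z => (Prod.fst z).c) h2
      simp only [Prod.fst_mul, Heis.mul_c, Heis.δ₂] at h3
      have h4 : (r:ℤ) * e.1.a = 0 := by linarith [h3]
      exact (mul_eq_zero.mp h4).resolve_left hr'
    have hesrc : e = ((Heis.δ₃, (1:Multiplicative ℤ)) : Heis r × Multiplicative ℤ) ^ (e.1.c)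
        * (((1 : Heis r), ofAdd (1:ℤ)) : Heis r × Multiplicative ℤ) ^ (toAdd e.2) := by
      rw [show ((Heis.δ₃, (1 : Multiplicative ℤ)) : Heis r × Multiplicative ℤ)
            = ((⟨0,0,1⟩ : Heis r), ofAdd (0:ℤ)) from rfl,
        show (((1 : Heis r), ofAdd (1:ℤ)) : Heis r × Multiplicative ℤ)
            = ((⟨0,0,0⟩ : Heis r), ofAdd (1:ℤ)) from rfl,
        central_zpowG, central_zpowG]
      refine Prod.ext ?_ ?_
      · show e.1 = _
        ext <;> simp [ha0, hb0]
      · show e.2 = _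
        simp [← ofAdd_add]
    have hfin := congrArg Φ hesrc
    rw [map_mul, map_zpow, map_zpow, ← hp, ← hq, heΦ, hpzpow, hqzpow, hpt0] at hfin
    have hsnd := congrArg (fun z => toAdd (Prod.snd z)) hfin
    simp only [Prod.snd_mul, toAdd_mul, toAdd_ofAdd, mul_zero] at hsnd
    -- hsnd : toAdd 1 = 0 + toAdd e.2 * qt
    have hsnd' : toAdd e.2 * qt = 0 := by simpa using hsnd.symm
    have het : toAdd e.2 = 0 := (mul_eq_zero.mp hsnd').resolve_right hqtne
    have hfst := congrArg (fun z => (Prod.fst z).c) hfin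
    simp only [Prod.fst_mul, Heis.mul_c, het, zero_mul] at hfst
    -- hfst : c = e.1.c * c₀ + 0 + junk
    refine ⟨e.1.c, ?_⟩
    simp at hfst
    linarith [hfst]
  -- normality consequences
  have hdvd_b : ∀ w : Heis rh × Multiplicative ℤ, w ∈ K → c₀ ∣ (rh:ℤ) * w.1.b := by
    intro w hw
    have hmem : w * ((⟨1,0,0⟩ : Heis rh), 1) * w⁻¹ * ((⟨1,0,0⟩ : Heis rh), (1:Multiplicative ℤ))⁻¹ ∈ K := by
      have h1 : ((⟨1,0,0⟩ : Heis rh), (1:Multiplicative ℤ)) * w⁻¹ *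
          ((⟨1,0,0⟩ : Heis rh), (1:Multiplicative ℤ))⁻¹ ∈ K :=
        Subgroup.Normal.conj_mem ‹K.Normal› _ (inv_mem hw) _
      have h2 := mul_mem hw h1
      rwa [← mul_assoc, ← mul_assoc] at h2
    rw [commG] at hmem
    have hd := hLc _ hmem
    have heq : (rh:ℤ) * (w.1.a * (⟨1,0,0⟩ : Heis rh).b - w.1.b * (⟨1,0,0⟩ : Heis rh).a)
        = -((rh:ℤ) * w.1.b) := by simp
    rw [heq] at hd
    exact dvd_neg.mp hd
  have hdvd_a : ∀ w : Heis rh × Multiplicative ℤ, w ∈ K → c₀ ∣ (rh:ℤ) * w.1.a := by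
    intro w hw
    have hmem : w * ((⟨0,1,0⟩ : Heis rh), 1) * w⁻¹ * ((⟨0,1,0⟩ : Heis rh), (1:Multiplicative ℤ))⁻¹ ∈ K := by
      have h1 : ((⟨0,1,0⟩ : Heis rh), (1:Multiplicative ℤ)) * w⁻¹ *
          ((⟨0,1,0⟩ : Heis rh), (1:Multiplicative ℤ))⁻¹ ∈ K :=
        Subgroup.Normal.conj_mem ‹K.Normal› _ (inv_mem hw) _
      have h2 := mul_mem hw h1
      rwa [← mul_assoc, ← mul_assoc] at h2
    rw [commG] at hmem
    have hd := hLc _ hmem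
    have heq : (rh:ℤ) * (w.1.a * (⟨0,1,0⟩ : Heis rh).b - w.1.b * (⟨0,1,0⟩ : Heis rh).a)
        = (rh:ℤ) * w.1.a := by simp
    rw [heq] at hd
    exact hd
  -- the image subgroups of the (a, b) coordinates
  let A0 : AddSubgroup ℤ :=
    { carrier := {z | ∃ g ∈ K, g.1.a = z}
      zero_mem' := ⟨1, one_mem K, rfl⟩
      add_mem' := by rintro x y ⟨g, hg, rfl⟩ ⟨h, hh, rfl⟩; exact ⟨g * h, mul_mem hg hh, rfl⟩
      neg_mem' := by rintro x ⟨g, hg, rfl⟩; exact ⟨g⁻¹, inv_mem hg, rfl⟩ }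
  obtain ⟨a₀, hA0⟩ := Int.subgroup_cyclic A0
  have ha₀A : a₀ ∈ A0 := by rw [hA0]; exact AddSubgroup.subset_closure rfl
  obtain ⟨u, huK, hua⟩ := ha₀A
  have hmemA : ∀ g, g ∈ K → ∃ s : ℤ, g.1.a = a₀ * s := by
    intro g hg
    have hm : g.1.a ∈ A0 := ⟨g, hg, rfl⟩
    rw [hA0, AddSubgroup.mem_closure_singleton] at hm
    obtain ⟨nn, hnn⟩ := hm
    exact ⟨nn, by rw [← hnn, smul_eq_mul]; ring⟩
  let B0 : AddSubgroup ℤ :=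
    { carrier := {z | ∃ g ∈ K, g.1.a = 0 ∧ g.1.b = z}
      zero_mem' := ⟨1, one_mem K, rfl, rfl⟩
      add_mem' := by
        rintro x y ⟨g, hg, hga, rfl⟩ ⟨h, hh, hha, rfl⟩
        exact ⟨g * h, mul_mem hg hh, by show g.1.a + h.1.a = 0; rw [hga, hha, add_zero], rfl⟩
      neg_mem' := by
        rintro x ⟨g, hg, hga, rfl⟩
        exact ⟨g⁻¹, inv_mem hg, by show -g.1.a = 0; rw [hga, neg_zero], rfl⟩ }
  obtain ⟨b₀, hB0⟩ := Int.subgroup_cyclic B0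
  have hb₀B : b₀ ∈ B0 := by rw [hB0]; exact AddSubgroup.subset_closure rfl
  obtain ⟨v, hvK, hva, hvb⟩ := hb₀B
  have hmemB : ∀ g, g ∈ K → g.1.a = 0 → ∃ t : ℤ, g.1.b = b₀ * t := by
    intro g hg hga
    have hm : g.1.b ∈ B0 := ⟨g, hg, hga, rfl⟩
    rw [hB0, AddSubgroup.mem_closure_singleton] at hm
    obtain ⟨nn, hnn⟩ := hm
    exact ⟨nn, by rw [← hnn, smul_eq_mul]; ring⟩
  -- decomposition of elements of K along the basis u, v
  have hdec : ∀ g, g ∈ K → ∃ s t : ℤ, g.1.a = s * a₀ ∧ g.1.b = s * u.1.b + t * b₀ := by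
    intro g hg
    obtain ⟨s, hs⟩ := hmemA g hg
    have hg'K : g * u ^ (-s) ∈ K := mul_mem hg (Subgroup.zpow_mem K huK _)
    have hg'a : (g * u ^ (-s)).1.a = 0 := by
      rw [Prod.fst_mul, Heis.mul_a, zpowG_a, hua, hs]; ring
    have hg'b : (g * u ^ (-s)).1.b = g.1.b - s * u.1.b := by
      rw [Prod.fst_mul, Heis.mul_b, zpowG_b]; ring
    obtain ⟨t, ht⟩ := hmemB _ hg'K hg'a
    rw [hg'b] at ht
    exact ⟨s, t, by rw [hs]; ring, by linarith [ht]⟩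
  obtain ⟨s1, t1, hs1, ht1⟩ := hdec x₁ (hΦK _)
  obtain ⟨s2, t2, hs2, ht2⟩ := hdec x₂ (hΦK _)
  have habD : a₀ * b₀ ∣ D := ⟨s1 * t2 - t1 * s2, by rw [hD, hs1, ht1, hs2, ht2]; ring⟩
  have ha₀ne : a₀ ≠ 0 := by
    intro h; apply hDne; obtain ⟨k, hk⟩ := habD; rw [hk, h]; ring
  have hb₀ne : b₀ ≠ 0 := by
    intro h; apply hDne; obtain ⟨k, hk⟩ := habD; rw [hk, h]; ring
  -- the key numbers
  set n : ℕ := Int.gcd u.1.b b₀ with hn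
  set N : ℤ := (n : ℤ) with hNdef
  have hNb : ∀ g, g ∈ K → N ∣ g.1.b := by
    intro g hg
    obtain ⟨s, t, _, htb⟩ := hdec g hg
    rw [htb]
    exact dvd_add ((Int.gcd_dvd_left _ _).mul_left s) ((Int.gcd_dvd_right _ _).mul_left t)
  have hNne : N ≠ 0 := by
    rw [hNdef, hn]
    intro h
    have h2 : Int.gcd u.1.b b₀ = 0 := by exact_mod_cast h
    exact hb₀ne (Int.gcd_eq_zero_iff.mp h2).2
  have hc₀N : c₀ ∣ (rh:ℤ) * N := by
    rw [hNdef, hn, Int.gcd_eq_gcd_ab u.1.b b₀]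
    have h1 := hdvd_b u huK
    have h2 := hdvd_b v hvK
    rw [hvb] at h2
    have heq : (rh:ℤ) * (u.1.b * Int.gcdA u.1.b b₀ + b₀ * Int.gcdB u.1.b b₀)
        = ((rh:ℤ) * u.1.b) * Int.gcdA u.1.b b₀ + ((rh:ℤ) * b₀) * Int.gcdB u.1.b b₀ := by ring
    rw [heq]
    exact dvd_add (h1.mul_right _) (h2.mul_right _)
  set g0 : ℤ := (Int.gcd a₀ N : ℤ) with hg0
  have hc₀g : c₀ ∣ (rh:ℤ) * g0 := by
    rw [hg0, Int.gcd_eq_gcd_ab a₀ N]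
    have h1 := hdvd_a u huK
    rw [hua] at h1
    have heq : (rh:ℤ) * (a₀ * Int.gcdA a₀ N + N * Int.gcdB a₀ N)
        = ((rh:ℤ) * a₀) * Int.gcdA a₀ N + ((rh:ℤ) * N) * Int.gcdB a₀ N := by ring
    rw [heq]
    exact dvd_add (h1.mul_right _) (hc₀N.mul_right _)
  have hg0ne : g0 ≠ 0 := by
    rw [hg0]
    intro h
    have h2 : Int.gcd a₀ N = 0 := by exact_mod_cast h
    exact ha₀ne (Int.gcd_eq_zero_iff.mp h2).1
  have hNr : N ∣ (r : ℤ) := by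
    have d1 : g0 * N ∣ a₀ * b₀ := mul_dvd_mul (Int.gcd_dvd_left _ _) (Int.gcd_dvd_right _ _)
    have h1 : ((rh:ℤ) * g0) * N ∣ ((rh:ℤ) * g0) * (r:ℤ) :=
      calc ((rh:ℤ) * g0) * N ∣ (rh:ℤ) * (a₀ * b₀) := by
            have h2 := mul_dvd_mul_left (rh:ℤ) d1
            rwa [← mul_assoc] at h2
        _ ∣ (r:ℤ) * c₀ := by rw [hrc₀]; exact mul_dvd_mul_left _ habD
        _ = c₀ * (r:ℤ) := mul_comm _ _
        _ ∣ ((rh:ℤ) * g0) * (r:ℤ) := mul_dvd_mul_right hc₀g _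
    exact (mul_dvd_mul_iff_left (mul_ne_zero hrh' hg0ne)).mp h1
  have hNler : N ≤ (r:ℤ) := Int.le_of_dvd (by exact_mod_cast hr) hNr
  haveI : NeZero n := ⟨by intro h; exact hNne (by rw [hNdef, h]; rfl)⟩
  -- the homomorphism recording b mod n
  let θ : Heis rh × Multiplicative ℤ →* Multiplicative (ZMod n) :=
    { toFun := fun g => ofAdd ((g.1.b : ZMod n))
      map_one' := by show ofAdd (((1 : Heis rh × Multiplicative ℤ).1.b : ZMod n)) = 1; simp
      map_mul' := by
        intro g h
        show ofAdd (((g * h).1.b : ZMod n)) = ofAdd ((g.1.b : ZMod n)) * ofAdd ((h.1.b : ZMod n))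
        rw [Prod.fst_mul, Heis.mul_b, ← ofAdd_add]
        push_cast
        rfl }
  have hKker : K ≤ θ.ker := by
    intro g hg
    have hd := hNb g hg
    show ofAdd ((g.1.b : ZMod n)) = 1
    have h2 : ((g.1.b : ZMod n)) = 0 :=
      (ZMod.intCast_zmod_eq_zero_iff_dvd _ _).mpr (by exact_mod_cast hd)
    rw [h2]
    rfl
  let θ' : (Heis rh × Multiplicative ℤ) ⧸ K →* Multiplicative (ZMod n) :=
    QuotientGroup.lift K θ hKker
  have hlift : ∀ g : Heis rh × Multiplicative ℤ, θ' (QuotientGroup.mk g) = θ g := fun g => rfl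
  have hbdvd : ∀ x : (Heis rh × Multiplicative ℤ) ⧸ K, x ∈ θ'.ker →
      ∀ g : Heis rh × Multiplicative ℤ, QuotientGroup.mk g = x → N ∣ g.1.b := by
    intro x hx g hgx
    have h1 : θ' (QuotientGroup.mk g) = 1 := by rw [hgx]; exact hx
    rw [hlift] at h1
    have h2 : ((g.1.b : ZMod n)) = 0 := by
      have h3 := congrArg toAdd h1
      exact congrArg toAdd (show ofAdd ((g.1.b : ZMod n)) = (1 : Multiplicative (ZMod n)) from h1)
    exact_mod_cast (ZMod.intCast_zmod_eq_zero_iff_dvd _ _).mp h2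
  constructor
  · -- Finiteness of the quotient
    apply Finite.of_surjective (f := fun s : Fin a₀.natAbs × Fin b₀.natAbs × Fin c₀.natAbs × Fin qt.natAbs =>
      (QuotientGroup.mk ((⟨((s.1 : ℕ) : ℤ), ((s.2.1 : ℕ) : ℤ), ((s.2.2.1 : ℕ) : ℤ)⟩ : Heis rh),
        ofAdd (((s.2.2.2 : ℕ) : ℤ))) : (Heis rh × Multiplicative ℤ) ⧸ K))
    intro x
    obtain ⟨g, rfl⟩ := QuotientGroup.mk_surjective x
    obtain ⟨m1, h1l, h1r⟩ := exists_red g.1.a a₀ ha₀ne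
    set g1 := g * u ^ (-m1) with hg1
    have hg1eq : (QuotientGroup.mk g1 : (Heis rh × Multiplicative ℤ) ⧸ K) = QuotientGroup.mk g :=
      QuotientGroup.mk_mul_of_mem g (Subgroup.zpow_mem K huK _)
    have hg1a : g1.1.a = g.1.a - m1 * a₀ := by
      rw [hg1, Prod.fst_mul, Heis.mul_a, zpowG_a, hua]; ring
    obtain ⟨m2, h2l, h2r⟩ := exists_red g1.1.b b₀ hb₀ne
    set g2 := g1 * v ^ (-m2) with hg2
    have hg2eq : (QuotientGroup.mk g2 : (Heis rh × Multiplicative ℤ) ⧸ K) = QuotientGroup.mk g1 :=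
      QuotientGroup.mk_mul_of_mem g1 (Subgroup.zpow_mem K hvK _)
    have hg2a : g2.1.a = g1.1.a := by
      rw [hg2, Prod.fst_mul, Heis.mul_a, zpowG_a, hva]; ring
    have hg2b : g2.1.b = g1.1.b - m2 * b₀ := by
      rw [hg2, Prod.fst_mul, Heis.mul_b, zpowG_b, hvb]; ring
    obtain ⟨m3, h3l, h3r⟩ := exists_red (toAdd g2.2) qt hqtne
    set g3 := g2 * q ^ (-m3) with hg3
    have hg3eq : (QuotientGroup.mk g3 : (Heis rh × Multiplicative ℤ) ⧸ K) = QuotientGroup.mk g2 :=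
      QuotientGroup.mk_mul_of_mem g2 (Subgroup.zpow_mem K (hΦK _) _)
    have hq3 : q ^ (-m3) = ((⟨0,0,-m3 * qc⟩ : Heis rh), ofAdd (-m3 * qt)) := hqzpow _
    have hg3a : g3.1.a = g2.1.a := by
      rw [hg3, Prod.fst_mul, Heis.mul_a, hq3]; simp
    have hg3b : g3.1.b = g2.1.b := by
      rw [hg3, Prod.fst_mul, Heis.mul_b, hq3]; simp
    have hg3t : toAdd g3.2 = toAdd g2.2 - m3 * qt := by
      rw [hg3, Prod.snd_mul, toAdd_mul, hq3]; simp; ring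
    obtain ⟨m4, h4l, h4r⟩ := exists_red g3.1.c c₀ hc₀ne
    set g4 := g3 * p ^ (-m4) with hg4
    have hg4eq : (QuotientGroup.mk g4 : (Heis rh × Multiplicative ℤ) ⧸ K) = QuotientGroup.mk g3 :=
      QuotientGroup.mk_mul_of_mem g3 (Subgroup.zpow_mem K (hΦK _) _)
    have hp4 : p ^ (-m4) = ((⟨0,0,-m4 * c₀⟩ : Heis rh), ofAdd (0:ℤ)) := by
      rw [hpzpow, hpt0, mul_zero]
    have hg4a : g4.1.a = g3.1.a := by
      rw [hg4, Prod.fst_mul, Heis.mul_a, hp4]; simp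
    have hg4b : g4.1.b = g3.1.b := by
      rw [hg4, Prod.fst_mul, Heis.mul_b, hp4]; simp
    have hg4c : g4.1.c = g3.1.c - m4 * c₀ := by
      rw [hg4, Prod.fst_mul, Heis.mul_c, hp4]; simp; ring
    have hg4t : toAdd g4.2 = toAdd g3.2 := by
      rw [hg4, Prod.snd_mul, toAdd_mul, hp4]; simp
    have Ha : 0 ≤ g4.1.a ∧ g4.1.a < (a₀.natAbs : ℤ) := by
      rw [hg4a, hg3a, hg2a, hg1a]; exact ⟨h1l, h1r⟩
    have Hb : 0 ≤ g4.1.b ∧ g4.1.b < (b₀.natAbs : ℤ) := by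
      rw [hg4b, hg3b, hg2b]; exact ⟨h2l, h2r⟩
    have Hc : 0 ≤ g4.1.c ∧ g4.1.c < (c₀.natAbs : ℤ) := by
      rw [hg4c]; exact ⟨h4l, h4r⟩
    have Ht : 0 ≤ toAdd g4.2 ∧ toAdd g4.2 < (qt.natAbs : ℤ) := by
      rw [hg4t, hg3t]; exact ⟨h3l, h3r⟩
    refine ⟨(⟨g4.1.a.toNat, ?_⟩, ⟨g4.1.b.toNat, ?_⟩, ⟨g4.1.c.toNat, ?_⟩, ⟨(toAdd g4.2).toNat, ?_⟩), ?_⟩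
    · exact_mod_cast (Int.toNat_of_nonneg Ha.1).symm ▸ Ha.2
    · exact_mod_cast (Int.toNat_of_nonneg Hb.1).symm ▸ Hb.2
    · exact_mod_cast (Int.toNat_of_nonneg Hc.1).symm ▸ Hc.2
    · exact_mod_cast (Int.toNat_of_nonneg Ht.1).symm ▸ Ht.2
    · have hval : ((⟨(((g4.1.a.toNat : ℕ)) : ℤ), (((g4.1.b.toNat : ℕ)) : ℤ), (((g4.1.c.toNat : ℕ)) : ℤ)⟩ : Heis rh),
          ofAdd ((((toAdd g4.2).toNat : ℕ)) : ℤ)) = g4 := by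
        refine Prod.ext ?_ ?_
        · show (⟨_, _, _⟩ : Heis rh) = g4.1
          ext
          · exact Int.toNat_of_nonneg Ha.1
          · exact Int.toNat_of_nonneg Hb.1
          · exact Int.toNat_of_nonneg Hc.1
        · show ofAdd _ = g4.2
          rw [Int.toNat_of_nonneg Ht.1, ofAdd_toAdd]
      show QuotientGroup.mk _ = _
      rw [hval, hg4eq, hg3eq, hg2eq, hg1eq]
  · -- the abelian normal subgroup of small index
    refine ⟨θ'.ker, MonoidHom.normal_ker θ', ?_, ?_⟩
    · rintro ⟨x, hx⟩ ⟨y, hy⟩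
      apply Subtype.ext
      show x * y = y * x
      obtain ⟨g, hgx⟩ := QuotientGroup.mk_surjective x
      obtain ⟨h, hhy⟩ := QuotientGroup.mk_surjective y
      obtain ⟨k1, hk1⟩ := hbdvd x hx g hgx
      obtain ⟨k2, hk2⟩ := hbdvd y hy h hhy
      rw [← hgx, ← hhy, ← QuotientGroup.mk_mul, ← QuotientGroup.mk_mul, QuotientGroup.eq]
      rw [commG']
      apply hcentK
      have heq : (rh:ℤ) * (h.1.a * g.1.b - h.1.b * g.1.a)
          = ((rh:ℤ) * N) * (h.1.a * k1 - k2 * g.1.a) := by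
        rw [hk1, hk2]; ring
      rw [heq]
      exact hc₀N.mul_right _
    · show θ'.ker.index ≤ r
      rw [Subgroup.index_ker]
      have h1 : Nat.card θ'.range ≤ Nat.card (Multiplicative (ZMod n)) :=
        Nat.card_le_card_of_injective _ Subtype.val_injective
      have h2 : Nat.card (Multiplicative (ZMod n)) = n := by
        rw [Nat.card_congr (Multiplicative.toAdd (α := ZMod n)), Nat.card_zmod]
      have h3 : n ≤ r := by rw [hNdef] at hNler; exact_mod_cast hNler
      omega
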